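/- Let Σ = {a,ā,b,b̄,c,c̄} with involution swapping each letter with its barred version, let k ≥ 1, and L = c·{ā,b̄}*·a^k·ā^k. For any m ≥ 1, the m-bounded k-hairpin completion satisfies H_k(L,m,m) = ⋃_{v ∈ {ā,b̄}^{≤m−1}} c·v·a^k·ā^k·v̄·c̄. -/

import Mathlib

open Computability

/-- Reverse-complement of a word under the involution `bar`. -/
def wbar {S : Type} (bar : S → S) (w : List S) : List S := (w.map bar).reverse

/-- The set of `α`-prefixes of `w` of length at most `ℓ`. -/
def Pa {S : Type} (α w : List S) (ℓ : ℕ) : Language S :=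
  {v | v ++ α <+: w ∧ v.length ≤ ℓ}

/-- `α Σ* ᾱ` : words with prefix `α` and suffix `ᾱ`. -/
def Dom {S : Type} (bar : S → S) (α : List S) : Language S :=
  {z | ∃ β, z = α ++ β ++ wbar bar α}

/-- One-step parameterized hairpin completion with binding word `α`,
left bound `ℓ`, right bound `r`. -/
def HaP {S : Type} (bar : S → S) (α : List S) (ℓ r : ℕ) (L : Language S) : Language S :=
  {z | ∃ γ β, γ.length ≤ ℓ ∧ z = γ ++ α ++ β ++ wbar bar α ++ wbar bar γ ∧
      α ++ β ++ wbar bar α ++ wbar bar γ ∈ L} ⊔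
  {z | ∃ γ β, γ.length ≤ r ∧ z = γ ++ α ++ β ++ wbar bar α ++ wbar bar γ ∧
      γ ++ α ++ β ++ wbar bar α ∈ L}

/-- One-step parameterized hairpin completion `H_k(L,ℓ,r)`. -/
def HkP {S : Type} (bar : S → S) (k ℓ r : ℕ) (L : Language S) : Language S :=
  {z | ∃ α : List S, α.length = k ∧ z ∈ HaP bar α ℓ r L}

def HaIter {S : Type} (bar : S → S) (α : List S) (ℓ r : ℕ) (L : Language S) : ℕ → Language S
  | 0 => L
  | n + 1 => HaP bar α ℓ r (HaIter bar α ℓ r L n)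

/-- Iterated parameterized hairpin completion `H_α*(L,ℓ,r)`. -/
def HaStar {S : Type} (bar : S → S) (α : List S) (ℓ r : ℕ) (L : Language S) : Language S :=
  {z | ∃ n, z ∈ HaIter bar α ℓ r L n}

def HkIter {S : Type} (bar : S → S) (k ℓ r : ℕ) (L : Language S) : ℕ → Language S
  | 0 => L
  | n + 1 => HkP bar k ℓ r (HkIter bar k ℓ r L n)

/-- Iterated parameterized hairpin completion `H_k*(L,ℓ,r)`. -/
def HkStar {S : Type} (bar : S → S) (k ℓ r : ℕ) (L : Language S) : Language S :=
  {z | ∃ n, z ∈ HkIter bar k ℓ r L n}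

/-- Unbounded two-sided hairpin completion `H_k(L)`. -/
def HU {S : Type} (bar : S → S) (k : ℕ) (L : Language S) : Language S :=
  {z | ∃ γ α β, α.length = k ∧ z = γ ++ α ++ β ++ wbar bar α ++ wbar bar γ ∧
      (α ++ β ++ wbar bar α ++ wbar bar γ ∈ L ∨ γ ++ α ++ β ++ wbar bar α ∈ L)}

/-- Unbounded right-sided hairpin completion `RH_k(L)`. -/
def RHU {S : Type} (bar : S → S) (k : ℕ) (L : Language S) : Language S :=
  {z | ∃ γ α β, α.length = k ∧ z = γ ++ α ++ β ++ wbar bar α ++ wbar bar γ ∧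
      γ ++ α ++ β ++ wbar bar α ∈ L}

def HUIter {S : Type} (bar : S → S) (k : ℕ) (L : Language S) : ℕ → Language S
  | 0 => L
  | n + 1 => HU bar k (HUIter bar k L n)

/-- Iterated unbounded two-sided hairpin completion `H_k*(L)`. -/
def HUStar {S : Type} (bar : S → S) (k : ℕ) (L : Language S) : Language S :=
  {z | ∃ n, z ∈ HUIter bar k L n}

def RHUIter {S : Type} (bar : S → S) (k : ℕ) (L : Language S) : ℕ → Language S
  | 0 => L
  | n + 1 => RHU bar k (RHUIter bar k L n)

/-- Iterated unbounded right-sided hairpin completion `RH_k*(L)`. -/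
def RHUStar {S : Type} (bar : S → S) (k : ℕ) (L : Language S) : Language S :=
  {z | ∃ n, z ∈ RHUIter bar k L n}

/-- Image of a language under reverse-complement. -/
def barSet {S : Type} (bar : S → S) (A : Language S) : Language S := wbar bar '' A

/-- The alphabet `Σ = {a, ā, b, b̄, c, c̄}`. -/
inductive HpAb : Type
  | a | abar | b | bbar | c | cbar
deriving DecidableEq

/-- The involution pairing `a ↔ ā`, `b ↔ b̄`, `c ↔ c̄`. -/
def HpAb.inv : HpAb → HpAb
  | .a => .abar
  | .abar => .a
  | .b => .bbar
  | .bbar => .b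
  | .c => .cbar
  | .cbar => .c

/-- The language `L = c · {ā,b̄}* · a^k · ā^k`. -/
def LHp (k : ℕ) : Language HpAb :=
  {z | ∃ v : List HpAb, (∀ x ∈ v, x = HpAb.abar ∨ x = HpAb.bbar) ∧
    z = HpAb.c :: (v ++ List.replicate k HpAb.a ++ List.replicate k HpAb.abar)}

/-- `u^n`: the `n`-fold concatenation of the word `u`. -/
def wpow {S : Type} (u : List S) (n : ℕ) : List S := (List.replicate n u).flatten

lemma HpAb.inv_inv (x : HpAb) : HpAb.inv (HpAb.inv x) = x := by cases x <;> rfl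

lemma wbar_cons (x : HpAb) (w : List HpAb) :
    wbar HpAb.inv (x :: w) = wbar HpAb.inv w ++ [HpAb.inv x] := by
  simp [wbar]

lemma wbar_replicate (n : ℕ) (x : HpAb) :
    wbar HpAb.inv (List.replicate n x) = List.replicate n (HpAb.inv x) := by
  simp [wbar]

lemma wbar_wbar (w : List HpAb) : wbar HpAb.inv (wbar HpAb.inv w) = w := by
  simp [wbar, Function.comp_def, HpAb.inv_inv]

lemma wbar_length (w : List HpAb) : (wbar HpAb.inv w).length = w.length := by
  simp [wbar]

/-- `H_k(L,m,m) = ⋃_{v ∈ {ā,b̄}^{≤m−1}} c·v·a^k·ā^k·v̄·c̄`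
for `L = c·{ā,b̄}*·a^k·ā^k`. -/
theorem HkP_LHp_eq (k m : ℕ) (hk : 1 ≤ k) (hm : 1 ≤ m) :
    HkP HpAb.inv k m m (LHp k) =
      {z | ∃ v : List HpAb, (∀ x ∈ v, x = HpAb.abar ∨ x = HpAb.bbar) ∧
        v.length ≤ m - 1 ∧
        z = HpAb.c :: (v ++ List.replicate k HpAb.a ++ List.replicate k HpAb.abar
              ++ wbar HpAb.inv v ++ [HpAb.cbar])} := by
  obtain ⟨k', rfl⟩ : ∃ k', k = k' + 1 := ⟨k - 1, by omega⟩
  set k := k' + 1 with hkdef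
  set A : List HpAb := List.replicate k HpAb.a with hA
  set Ab : List HpAb := List.replicate k HpAb.abar with hAb
  have hwbA : wbar HpAb.inv A = Ab := by rw [hA, hAb, wbar_replicate]; simp [HpAb.inv]
  ext z
  constructor
  · rintro ⟨α, hα, hz⟩
    rcases hz with ⟨γ, β, hγ, rfl, w, hw, hwL⟩ | ⟨γ, β, hγ, rfl, w, hw, hwL⟩
    · -- left extension: impossible since ᾱ contains c̄
      exfalso
      obtain ⟨x, t, rfl⟩ : ∃ x t, α = x :: t := by
        cases α with
        | nil => exact absurd hα (by simp <;> omega)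
        | cons x t => exact ⟨x, t, rfl⟩
      have hx : x = HpAb.c := by
        have := congrArg (List.head? ·) hwL
        simpa using this
      subst hx
      have hmem : HpAb.cbar ∈ (HpAb.c :: t) ++ β ++ wbar HpAb.inv (HpAb.c :: t)
          ++ wbar HpAb.inv γ := by
        rw [wbar_cons]
        simp [HpAb.inv]
      rw [hwL] at hmem
      simp [List.mem_replicate] at hmem
      rcases hw _ hmem with h' | h' <;> exact HpAb.noConfusion h'
    · -- right extension
      -- hwL : γ ++ α ++ β ++ wbar α = c :: (w ++ A ++ Ab)
      have hsplit : (γ ++ α ++ β) ++ wbar HpAb.inv α = (HpAb.c :: (w ++ A)) ++ Ab := by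
        simpa [List.append_assoc] using hwL
      have hlen : (wbar HpAb.inv α).length = Ab.length := by
        simp [wbar_length, hα, hAb]
      obtain ⟨h1, h2⟩ := List.append_inj' hsplit hlen
      have hαA : α = A := by
        have := congrArg (wbar HpAb.inv) h2
        rwa [wbar_wbar, hAb, wbar_replicate] at this
      subst hαA
      -- h1 : γ ++ A ++ β = c :: (w ++ A)
      have hwcount : List.count HpAb.a w = 0 := by
        rw [List.count_eq_zero]
        intro h
        rcases hw _ h with h' | h' <;> exact HpAb.noConfusion h'
      have hcount := congrArg (List.count HpAb.a) h1
      simp [List.count_append, hA, hwcount, List.count_cons, List.count_replicate] at hcount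
      have hβnil : β = [] := by
        rcases List.eq_nil_or_concat β with h | ⟨t, x, rfl⟩
        · exact h
        · exfalso
          simp only [List.concat_eq_append] at h1
          have hsplit2 : ((γ ++ A) ++ t) ++ [x]
              = ((HpAb.c :: (w ++ List.replicate k' HpAb.a)) ++ [HpAb.a]) := by
            have : A = List.replicate k' HpAb.a ++ [HpAb.a] := by
              rw [hA, hkdef, List.replicate_succ']
            calc ((γ ++ A) ++ t) ++ [x] = γ ++ A ++ (t ++ [x]) := by
                  simp [List.append_assoc]
              _ = HpAb.c :: (w ++ A) := h1
              _ = _ := by rw [this]; simp [List.append_assoc]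
          obtain ⟨-, hx⟩ := List.append_inj' hsplit2 (by simp)
          have hxa : x = HpAb.a := by simpa using hx
          have hmem2 : HpAb.a ∈ t ++ [x] := by simp [hxa]
          rw [← List.count_pos_iff] at hmem2
          simp only [List.concat_eq_append] at hcount
          omega
      subst hβnil
      have hγeq : γ = HpAb.c :: w := by
        have : γ ++ A = (HpAb.c :: w) ++ A := by simpa [List.append_assoc] using h1
        exact (List.append_inj' this rfl).1
      subst hγeq
      refine ⟨w, hw, ?_, ?_⟩
      · simp at hγ; omega
      · rw [hwbA, wbar_cons]
        simp [hA, hAb, List.append_assoc, HpAb.inv]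
  · rintro ⟨v, hv, hlen, rfl⟩
    refine ⟨A, by simp [hA], Or.inr ⟨HpAb.c :: v, [], by simp; omega, ?_, v, hv, by
      simp [hwbA, hA, hAb, List.append_assoc]; exact hwbA⟩⟩
    rw [hwbA, wbar_cons]
    simp [hA, hAb, List.append_assoc, HpAb.inv]
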